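/- Let f : X → Y be a homeomorphism of topological spaces. If x ∈ X is n-proper in X (defined inductively: 1-proper means every neighbourhood is intersected by infinitely many pairwise disjoint clopen subsets of X; n-proper for n > 1 means every neighbourhood contains infinitely many (n−1)-proper points), then f(x) is n-proper in Y. Consequently the set ρ(X) = {n : X has a connected component of proper rank n with nonempty interior} is a topological invariant: ρ(X) = ρ(Y). -/

import Mathlib

/-- A point is `Proper1` ("1-proper") if every neighbourhood is intersected by
infinitely many pairwise disjoint clopen subsets of the space. -/
def Proper1 {X : Type*} [TopologicalSpace X] (x : X) : Prop :=
  ∀ U ∈ nhds x, ∃ C : ℕ → Set X, (∀ i, IsClopen (C i)) ∧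
    Pairwise (Function.onFun Disjoint C) ∧ ∀ i, (C i ∩ U).Nonempty

/-- `NProper n x` : `x` is `n`-proper (for `n ≥ 1`; `NProper 0` is trivially true).
For `n > 1`, `x` is `n`-proper if every neighbourhood of `x` contains infinitely
many `(n-1)`-proper points. -/
def NProper {X : Type*} [TopologicalSpace X] : ℕ → X → Prop
  | 0, _ => True
  | 1, x => Proper1 x
  | (n+2), x => ∀ U ∈ nhds x, {y : X | y ∈ U ∧ NProper (n+1) y}.Infinite

/-- The proper rank of a subset S is n : S contains an n-proper point but no
(n+1)-proper point (with NProper 0 trivially true, rank 0 means S is nonempty and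
contains no proper point). -/
def ProperRankIs {X : Type*} [TopologicalSpace X] (S : Set X) (n : ℕ) : Prop :=
  (∃ x ∈ S, NProper n x) ∧ ∀ x ∈ S, ¬ NProper (n + 1) x

/-- ρ(X) : the set of n such that X has a connected component of proper rank n with
nonempty interior (an n-distinguished component). -/
def rho (X : Type*) [TopologicalSpace X] : Set ℕ :=
  {n | ∃ x : X, ProperRankIs (connectedComponent x) n ∧
    (interior (connectedComponent x)).Nonempty}

lemma proper1_map {X Y : Type*} [TopologicalSpace X] [TopologicalSpace Y] (f : X ≃ₜ Y)
    {x : X} (h : Proper1 x) : Proper1 (f x) := by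
  intro U hU
  obtain ⟨C, hC, hD, hN⟩ := h (f ⁻¹' U) (f.continuous.continuousAt.preimage_mem_nhds hU)
  refine ⟨fun i => f '' C i, fun i => ?_, ?_, fun i => ?_⟩
  · have := (hC i).preimage f.symm.continuous
    rwa [f.preimage_symm] at this
  · intro i j hij
    exact (Set.disjoint_image_iff f.injective).2 (hD hij)
  · obtain ⟨z, hz1, hz2⟩ := hN i
    exact ⟨f z, ⟨z, hz1, rfl⟩, hz2⟩

lemma nproper_map {X Y : Type*} [TopologicalSpace X] [TopologicalSpace Y] (f : X ≃ₜ Y) :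
    ∀ n : ℕ, ∀ x : X, NProper n x → NProper n (f x) := by
  intro n
  induction n with
  | zero => intro x _; trivial
  | succ m ih =>
    match m with
    | 0 => intro x h; exact proper1_map f h
    | k+1 =>
      intro x h U hU
      have h' := h (f ⁻¹' U) (f.continuous.continuousAt.preimage_mem_nhds hU)
      have : f '' {y : X | y ∈ f ⁻¹' U ∧ NProper (k+1) y} ⊆ {y : Y | y ∈ U ∧ NProper (k+1) y} := by
        rintro _ ⟨z, ⟨hz1, hz2⟩, rfl⟩
        exact ⟨hz1, ih z hz2⟩
      exact ((h'.image (f.injective.injOn)).mono this)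

lemma nproper_iff {X Y : Type*} [TopologicalSpace X] [TopologicalSpace Y] (f : X ≃ₜ Y)
    (n : ℕ) (x : X) : NProper n x ↔ NProper n (f x) := by
  refine ⟨nproper_map f n x, fun h => ?_⟩
  have := nproper_map f.symm n (f x) h
  simpa using this

lemma image_cc {X Y : Type*} [TopologicalSpace X] [TopologicalSpace Y] (f : X ≃ₜ Y) (x : X) :
    f '' connectedComponent x = connectedComponent (f x) := by
  refine (f.continuous.image_connectedComponent_subset x).antisymm ?_
  have := f.symm.continuous.image_connectedComponent_subset (f x)
  rw [f.symm_apply_apply] at this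
  intro y hy
  have : f.symm y ∈ connectedComponent x := this ⟨y, hy, rfl⟩
  exact ⟨f.symm y, this, f.apply_symm_apply y⟩

lemma rho_subset {X Y : Type*} [TopologicalSpace X] [TopologicalSpace Y] (f : X ≃ₜ Y) :
    rho X ⊆ rho Y := by
  rintro n ⟨x, ⟨⟨x0, hx0, hx0p⟩, hno⟩, hint⟩
  refine ⟨f x, ⟨⟨f x0, ?_, (nproper_iff f n x0).1 hx0p⟩, ?_⟩, ?_⟩
  · rw [← image_cc f x]; exact ⟨x0, hx0, rfl⟩
  · intro y hy hyp
    rw [← image_cc f x] at hy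
    obtain ⟨z, hz, rfl⟩ := hy
    exact hno z hz ((nproper_iff f (n+1) z).2 hyp)
  · rw [← image_cc f x, ← f.image_interior]
    exact hint.image f

/-- A homeomorphism preserves n-properness, and consequently
ρ is a topological invariant. -/
theorem stmt_18 {X Y : Type*} [TopologicalSpace X] [TopologicalSpace Y] (f : X ≃ₜ Y) :
    (∀ n : ℕ, 1 ≤ n → ∀ x : X, NProper n x → NProper n (f x)) ∧ rho X = rho Y := by
  exact ⟨fun n _ x h => nproper_map f n x h,
    le_antisymm (rho_subset f) (rho_subset f.symm)⟩
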